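/- Let H be a complex Hilbert space and A a bounded normal operator on H that is invertible in the algebra of bounded operators and whose spectrum contains no negative real number. Let L > 0 be finite, let I be a countable index set, and let g : I → H satisfy the lower frame inequality: there exists c > 0 such that ∑_{i∈I} |⟨f, g_i⟩|² ≥ c‖f‖² for all f ∈ H. Then there exists a constant C > 0 such that ∑_{i∈I} ∫₀ᴸ |⟨f, A^t g_i⟩|² dt ≥ C‖f‖² for all f ∈ H. -/

import Mathlib

open scoped InnerProductSpace
open MeasureTheory
open scoped ENNReal


theorem aux_upper_frame_bound {H : Type*} [NormedAddCommGroup H] [InnerProductSpace ℂ H]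
    [CompleteSpace H] {I : Type*} (g : I → H)
    (hsum : ∀ h : H, Summable fun i => ‖⟪h, g i⟫_ℂ‖ ^ 2) :
    ∃ B : ℝ, 0 ≤ B ∧ ∀ h : H, ∑' i, ‖⟪h, g i⟫_ℂ‖ ^ 2 ≤ B * ‖h‖ ^ 2 := by
  classical
  set φ : {p : Finset I × (I → ℂ) // ∑ i ∈ p.1, ‖p.2 i‖ ^ 2 ≤ 1} → (H →L[ℂ] ℂ) :=
    fun p => ∑ i ∈ p.1.1, p.1.2 i • innerSL ℂ (g i) with hφ
  have hpt : ∀ x : H, ∃ C, ∀ p, ‖φ p x‖ ≤ C := by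
    intro x
    refine ⟨Real.sqrt (∑' i, ‖⟪x, g i⟫_ℂ‖ ^ 2), fun p => ?_⟩
    have h1 : ‖φ p x‖ ≤ ∑ i ∈ p.1.1, ‖p.1.2 i‖ * ‖⟪g i, x⟫_ℂ‖ := by
      rw [hφ]
      simp only [ContinuousLinearMap.sum_apply, ContinuousLinearMap.smul_apply]
      refine (norm_sum_le _ _).trans (le_of_eq ?_)
      refine Finset.sum_congr rfl fun i _ => ?_
      rw [norm_smul]; rfl
    have h2 : (∑ i ∈ p.1.1, ‖p.1.2 i‖ * ‖⟪g i, x⟫_ℂ‖) ^ 2 ≤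
        (∑ i ∈ p.1.1, ‖p.1.2 i‖ ^ 2) * ∑ i ∈ p.1.1, ‖⟪g i, x⟫_ℂ‖ ^ 2 :=
      Finset.sum_mul_sq_le_sq_mul_sq _ _ _
    have h3 : (∑ i ∈ p.1.1, ‖⟪g i, x⟫_ℂ‖ ^ 2) ≤ ∑' i, ‖⟪x, g i⟫_ℂ‖ ^ 2 := by
      have : (∑ i ∈ p.1.1, ‖⟪g i, x⟫_ℂ‖ ^ 2) = ∑ i ∈ p.1.1, ‖⟪x, g i⟫_ℂ‖ ^ 2 := by
        refine Finset.sum_congr rfl fun i _ => by rw [norm_inner_symm]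
      rw [this]
      exact (hsum x).sum_le_tsum _ (fun i _ => sq_nonneg _)
    have h4 : (∑ i ∈ p.1.1, ‖p.1.2 i‖ * ‖⟪g i, x⟫_ℂ‖) ^ 2 ≤ ∑' i, ‖⟪x, g i⟫_ℂ‖ ^ 2 := by
      calc _ ≤ (∑ i ∈ p.1.1, ‖p.1.2 i‖ ^ 2) * ∑ i ∈ p.1.1, ‖⟪g i, x⟫_ℂ‖ ^ 2 := h2
        _ ≤ 1 * ∑' i, ‖⟪x, g i⟫_ℂ‖ ^ 2 := by
            refine mul_le_mul p.2 h3 (Finset.sum_nonneg fun i _ => sq_nonneg _)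
              zero_le_one
        _ = _ := one_mul _
    have h5 : ‖φ p x‖ ^ 2 ≤ ∑' i, ‖⟪x, g i⟫_ℂ‖ ^ 2 := by
      refine le_trans (pow_le_pow_left₀ (norm_nonneg _) h1 2) h4
    exact (Real.le_sqrt (norm_nonneg _) (tsum_nonneg fun i => sq_nonneg _)).mpr h5
  obtain ⟨C', hC'⟩ := banach_steinhaus hpt
  have hC'0 : 0 ≤ C' := le_trans (norm_nonneg _) (hC' ⟨(∅, fun _ => 0), by simp⟩)
  refine ⟨C' ^ 2, sq_nonneg _, fun h => ?_⟩
  refine (hsum h).tsum_le_of_sum_le fun s => ?_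
  set S : ℝ := ∑ i ∈ s, ‖⟪h, g i⟫_ℂ‖ ^ 2 with hS
  by_cases hpos : 0 < S
  case neg =>
    exact le_trans (not_lt.mp hpos) (by positivity)
  case pos =>
    set a : I → ℂ := fun i => (starRingEnd ℂ) ⟪g i, h⟫_ℂ / (Real.sqrt S : ℂ) with ha
    have hnormsym : ∀ i, ‖⟪g i, h⟫_ℂ‖ = ‖⟪h, g i⟫_ℂ‖ := fun i => norm_inner_symm _ _
    have hsqrtpos : 0 < Real.sqrt S := Real.sqrt_pos.mpr hpos
    have hasum : ∑ i ∈ s, ‖a i‖ ^ 2 ≤ 1 := by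
      have : ∀ i, ‖a i‖ ^ 2 = ‖⟪h, g i⟫_ℂ‖ ^ 2 / S := by
        intro i
        rw [ha]
        simp only [norm_div, RCLike.norm_conj]
        rw [div_pow, hnormsym i, Complex.norm_real, Real.norm_eq_abs,
          abs_of_pos hsqrtpos, Real.sq_sqrt hpos.le]
      rw [Finset.sum_congr rfl fun i _ => this i, ← Finset.sum_div, ← hS,
        div_self hpos.ne']
    have hφval : φ ⟨(s, a), hasum⟩ h = ((S / Real.sqrt S : ℝ) : ℂ) := by
      rw [hφ]
      simp only [ContinuousLinearMap.sum_apply, ContinuousLinearMap.smul_apply]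
      have : ∀ i ∈ s, a i • (innerSL ℂ (g i)) h
          = ((‖⟪h, g i⟫_ℂ‖ ^ 2 / Real.sqrt S : ℝ) : ℂ) := by
        intro i _
        have : (innerSL ℂ (g i)) h = ⟪g i, h⟫_ℂ := rfl
        rw [this, ha, smul_eq_mul, div_mul_eq_mul_div, Complex.conj_mul',
          ← hnormsym i]
        push_cast
        rfl
      rw [Finset.sum_congr rfl this, ← Complex.ofReal_sum]
      refine Complex.ofReal_inj.mpr ?_
      rw [← Finset.sum_div, ← hS]
    have : ‖φ ⟨(s, a), hasum⟩ h‖ ≤ C' * ‖h‖ :=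
      le_trans ((φ ⟨(s, a), hasum⟩).le_opNorm h)
        (mul_le_mul_of_nonneg_right (hC' _) (norm_nonneg _))
    rw [hφval, Complex.norm_real, Real.norm_eq_abs,
      abs_of_pos (div_pos hpos hsqrtpos)] at this
    have hdiv : S / Real.sqrt S = Real.sqrt S := by
      rw [eq_comm, eq_div_iff hsqrtpos.ne', Real.mul_self_sqrt hpos.le]
    rw [hdiv] at this
    calc S = Real.sqrt S * Real.sqrt S := (Real.mul_self_sqrt hpos.le).symm
      _ ≤ (C' * ‖h‖) * (C' * ‖h‖) := mul_self_le_mul_self hsqrtpos.le this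
      _ = C' ^ 2 * ‖h‖ ^ 2 := by ring

theorem aux_cfc_cpow_continuous {H : Type*} [NormedAddCommGroup H] [InnerProductSpace ℂ H]
    [CompleteSpace H] (A : H →L[ℂ] H) (hA : IsStarNormal A)
    (hslit : ∀ z ∈ spectrum ℂ A, z ∈ Complex.slitPlane) :
    Continuous (fun t : ℝ => cfc (fun z : ℂ => z ^ (t : ℂ)) A) := by
  have hcont : ∀ t : ℝ, ContinuousOn (fun z : ℂ => z ^ (t : ℂ)) (spectrum ℂ A) :=
    fun t z hz => (continuousAt_cpow_const (hslit z hz)).continuousWithinAt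
  have hF : Continuous (fun p : ℝ × spectrum ℂ A => (p.2 : ℂ) ^ (p.1 : ℂ)) := by
    rw [continuous_iff_continuousAt]
    intro p
    have h1 : ContinuousAt (fun q : ℂ × ℂ => q.1 ^ q.2) ((p.2 : ℂ), (p.1 : ℂ)) :=
      continuousAt_cpow (hslit _ p.2.2)
    have h2 : ContinuousAt (fun p : ℝ × spectrum ℂ A => ((p.2 : ℂ), (p.1 : ℂ))) p :=
      Continuous.continuousAt (by continuity)
    exact ContinuousAt.comp (g := fun q : ℂ × ℂ => q.1 ^ q.2)
      (f := fun p : ℝ × spectrum ℂ A => ((p.2 : ℂ), (p.1 : ℂ))) h1 h2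
  let F : C(ℝ × spectrum ℂ A, ℂ) := ⟨_, hF⟩
  have key : ∀ t : ℝ, cfc (fun z : ℂ => z ^ (t : ℂ)) A = cfcHom hA (F.curry t) := by
    intro t
    rw [cfc_apply (fun z : ℂ => z ^ (t : ℂ)) A hA (hcont t)]
    congr 1
  have : (fun t : ℝ => cfc (fun z : ℂ => z ^ (t : ℂ)) A)
      = fun t => cfcHom hA (F.curry t) := funext key
  rw [this]
  exact (cfcHom_isClosedEmbedding hA).continuous.comp F.curry.continuous

theorem aux_cfc_cpow_mul_neg {H : Type*} [NormedAddCommGroup H] [InnerProductSpace ℂ H]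
    [CompleteSpace H] (A : H →L[ℂ] H) (hA : IsStarNormal A)
    (hslit : ∀ z ∈ spectrum ℂ A, z ∈ Complex.slitPlane) (t : ℝ) :
    (cfc (fun z : ℂ => z ^ (t : ℂ)) A) * (cfc (fun z : ℂ => z ^ ((-t : ℝ) : ℂ)) A) = 1 := by
  have hcont : ∀ s : ℝ, ContinuousOn (fun z : ℂ => z ^ (s : ℂ)) (spectrum ℂ A) :=
    fun s z hz => (continuousAt_cpow_const (hslit z hz)).continuousWithinAt
  rw [← cfc_mul _ _ A (hcont t) (hcont (-t))]
  rw [show (fun z : ℂ => z ^ (t : ℂ) * z ^ ((-t : ℝ) : ℂ)) = fun z : ℂ =>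
    z ^ (t : ℂ) * z ^ (-(t : ℂ)) by push_cast; rfl]
  have h1 : cfc (fun _ : ℂ => (1 : ℂ)) A = 1 := cfc_one ℂ A
  rw [← h1]
  apply cfc_congr
  intro z hz
  have hz0 : z ≠ 0 := Complex.slitPlane_ne_zero (hslit z hz)
  show z ^ (t : ℂ) * z ^ (-(t : ℂ)) = 1
  rw [← Complex.cpow_add _ _ hz0, add_neg_cancel, Complex.cpow_zero]

theorem aux_main {H : Type*} [NormedAddCommGroup H] [InnerProductSpace ℂ H] [CompleteSpace H]
    (A : H →L[ℂ] H) (hA : IsStarNormal A) (hinv : IsUnit A)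
    (hspec : ∀ z ∈ spectrum ℂ A, 0 ≤ z.re ∨ z.im ≠ 0)
    (L : ℝ) (hL : 0 < L)
    {I : Type*} [Countable I] (g : I → H)
    (c : ℝ) (hc : 0 < c)
    (hlow : ∀ f : H, c * ‖f‖ ^ 2 ≤ ∑' i : I, ‖⟪f, g i⟫_ℂ‖ ^ 2) :
    ∃ C : ℝ, 0 < C ∧ ∀ f : H,
      C * ‖f‖ ^ 2 ≤
        ∑' i : I, ∫ t in (0 : ℝ)..L, ‖⟪f, (cfc (fun z : ℂ => z ^ (t : ℂ)) A) (g i)⟫_ℂ‖ ^ 2 := by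
  classical
  have hz0 : (0 : ℂ) ∉ spectrum ℂ A := (spectrum.zero_notMem_iff ℂ).mpr hinv
  have hslit : ∀ z ∈ spectrum ℂ A, z ∈ Complex.slitPlane := by
    intro z hz
    rcases hspec z hz with h | h
    · rcases lt_or_eq_of_le h with h' | h'
      · exact Or.inl h'
      · refine Or.inr fun him => hz0 ?_
        have : z = 0 := Complex.ext h'.symm him
        rwa [this] at hz
    · exact Or.inr h
  set P : ℝ → H →L[ℂ] H := fun t => cfc (fun z : ℂ => z ^ (t : ℂ)) A with hPdef
  have hcontP : Continuous P := aux_cfc_cpow_continuous A hA hslit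
  have hmul : ∀ t : ℝ, P t * P (-t) = 1 := fun t => aux_cfc_cpow_mul_neg A hA hslit t
  -- adjoint
  set D : ℝ → H →L[ℂ] H := fun t => ContinuousLinearMap.adjoint (P t) with hDdef
  have hDinner : ∀ (t : ℝ) (f x : H), ⟪f, P t x⟫_ℂ = ⟪D t f, x⟫_ℂ := fun t f x =>
    (ContinuousLinearMap.adjoint_inner_left _ _ _).symm
  obtain ⟨M0, hM0⟩ : ∃ M0, ∀ x ∈ Set.Icc (-L) L, ‖P x‖ ≤ M0 :=
    IsCompact.exists_bound_of_continuousOn isCompact_Icc hcontP.continuousOn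
  set M : ℝ := max M0 1 with hMdef
  have hM1 : (1 : ℝ) ≤ M := le_max_right _ _
  have hMpos : (0 : ℝ) < M := lt_of_lt_of_le one_pos hM1
  have hM : ∀ t ∈ Set.Icc (-L) L, ‖P t‖ ≤ M := fun t ht =>
    (hM0 t ht).trans (le_max_left _ _)
  have hnormD : ∀ t : ℝ, ‖D t‖ = ‖P t‖ := fun t =>
    LinearIsometryEquiv.norm_map ContinuousLinearMap.adjoint (P t)
  -- `f = (P (-t))† (D t f)`
  have hrecov : ∀ (t : ℝ) (f : H), (ContinuousLinearMap.adjoint (P (-t))) (D t f) = f := by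
    intro t f
    have h1 : ContinuousLinearMap.adjoint (P t * P (-t)) = (1 : H →L[ℂ] H) := by
      rw [hmul t]
      rw [show (1 : H →L[ℂ] H) = ContinuousLinearMap.id ℂ H from rfl]
      exact ContinuousLinearMap.adjoint_id
    have h2 : ContinuousLinearMap.adjoint (P t * P (-t)) =
        ContinuousLinearMap.adjoint (P (-t)) * ContinuousLinearMap.adjoint (P t) :=
      ContinuousLinearMap.adjoint_comp _ _
    have h3 : (ContinuousLinearMap.adjoint (P (-t)) * D t) = (1 : H →L[ℂ] H) := by
      rw [hDdef, ← h2, h1]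
    calc (ContinuousLinearMap.adjoint (P (-t))) (D t f)
        = ((ContinuousLinearMap.adjoint (P (-t))) * D t) f := rfl
      _ = f := by rw [h3]; rfl
  have hfM : ∀ (t : ℝ), t ∈ Set.Icc 0 L → ∀ f : H, ‖f‖ ≤ M * ‖D t f‖ := by
    intro t ht f
    have hmem : -t ∈ Set.Icc (-L) L := ⟨neg_le_neg ht.2, le_trans (neg_nonpos.mpr ht.1) (ht.1.trans ht.2)⟩
    calc ‖f‖ = ‖(ContinuousLinearMap.adjoint (P (-t))) (D t f)‖ := by rw [hrecov]
      _ ≤ ‖ContinuousLinearMap.adjoint (P (-t))‖ * ‖D t f‖ :=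
          ContinuousLinearMap.le_opNorm _ _
      _ ≤ M * ‖D t f‖ := by
          refine mul_le_mul_of_nonneg_right ?_ (norm_nonneg _)
          rw [LinearIsometryEquiv.norm_map]
          exact hM _ hmem
  have hDM : ∀ (t : ℝ), t ∈ Set.Icc 0 L → ∀ f : H, ‖D t f‖ ≤ M * ‖f‖ := by
    intro t ht f
    refine le_trans ((D t).le_opNorm f) (mul_le_mul_of_nonneg_right ?_ (norm_nonneg _))
    rw [hnormD]
    exact hM t ⟨le_trans (neg_nonpos.mpr hL.le) ht.1, ht.2⟩
  -- summability of the discrete system at every vector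
  have hsummable : ∀ h : H, Summable fun i => ‖⟪h, g i⟫_ℂ‖ ^ 2 := by
    intro h
    by_contra hns
    have h0 := tsum_eq_zero_of_not_summable hns
    have hle := hlow h
    rw [h0] at hle
    have hh2 : ‖h‖ ^ 2 ≤ 0 := by nlinarith
    apply hns
    have hh : h = 0 := by
      have h3 : ‖h‖ = 0 := by nlinarith [norm_nonneg h, sq_nonneg ‖h‖]
      exact norm_eq_zero.mp h3
    have heq : (fun i => ‖⟪h, g i⟫_ℂ‖ ^ 2) = fun _ => (0 : ℝ) := by
      funext i; rw [hh, inner_zero_left]; simp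
    rw [heq]
    exact summable_zero
  obtain ⟨B, hB0, hBle⟩ := aux_upper_frame_bound g hsummable
  refine ⟨c / M ^ 2 * L, by positivity, fun f => ?_⟩
  set F : I → ℝ → ℝ := fun i t => ‖⟪f, P t (g i)⟫_ℂ‖ ^ 2 with hFdef
  have hcontF : ∀ i, Continuous (F i) := by
    intro i
    have h1 : Continuous (fun t => P t (g i)) :=
      (ContinuousLinearMap.apply ℂ H (g i)).continuous.comp hcontP
    have h2 : Continuous (fun t => ⟪f, P t (g i)⟫_ℂ) := Continuous.inner continuous_const h1
    exact (h2.norm.pow 2)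
  set μ : Measure ℝ := volume.restrict (Set.Ioc (0 : ℝ) L) with hμdef
  have hμuniv : μ Set.univ = ENNReal.ofReal L := by
    rw [hμdef, Measure.restrict_apply_univ, Real.volume_Ioc, sub_zero]
  have hGm : ∀ i, AEMeasurable (fun t => ENNReal.ofReal (F i t)) μ :=
    fun i => (ENNReal.continuous_ofReal.comp (hcontF i)).measurable.aemeasurable
  -- pointwise two-sided bound
  have hpt : ∀ t ∈ Set.Icc (0 : ℝ) L,
      ENNReal.ofReal (c / M ^ 2 * ‖f‖ ^ 2) ≤ (∑' i, ENNReal.ofReal (F i t)) ∧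
      (∑' i, ENNReal.ofReal (F i t)) ≤ ENNReal.ofReal (B * (M ^ 2 * ‖f‖ ^ 2)) := by
    intro t ht
    set h : H := D t f with hhdef
    have hFt : ∀ i, F i t = ‖⟪h, g i⟫_ℂ‖ ^ 2 := by
      intro i
      show ‖⟪f, P t (g i)⟫_ℂ‖ ^ 2 = _
      rw [hDinner t f (g i)]
    have hsum : (∑' i, ENNReal.ofReal (F i t))
        = ENNReal.ofReal (∑' i, ‖⟪h, g i⟫_ℂ‖ ^ 2) := by
      have h1 : (∑' i, ENNReal.ofReal (F i t))
          = ∑' i, ENNReal.ofReal (‖⟪h, g i⟫_ℂ‖ ^ 2) :=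
        tsum_congr fun i => congrArg ENNReal.ofReal (hFt i)
      rw [h1, ← ENNReal.ofReal_tsum_of_nonneg (fun i => sq_nonneg _) (hsummable h)]
    constructor
    · rw [hsum]
      refine ENNReal.ofReal_le_ofReal ?_
      have h1 : ‖f‖ ^ 2 ≤ M ^ 2 * ‖h‖ ^ 2 := by
        have := hfM t ht f
        nlinarith [norm_nonneg f, norm_nonneg h, hMpos]
      have h2 : c / M ^ 2 * ‖f‖ ^ 2 ≤ c * ‖h‖ ^ 2 := by
        rw [div_mul_eq_mul_div, div_le_iff₀ (by positivity)]
        nlinarith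
      exact h2.trans (hlow h)
    · rw [hsum]
      refine ENNReal.ofReal_le_ofReal ?_
      refine (hBle h).trans ?_
      have h1 : ‖h‖ ^ 2 ≤ M ^ 2 * ‖f‖ ^ 2 := by
        have := hDM t ht f
        nlinarith [norm_nonneg f, norm_nonneg h, hMpos]
      nlinarith
  set S : ℝ≥0∞ := (∑' i, ∫⁻ t, ENNReal.ofReal (F i t) ∂μ) with hSdef
  have hSswap : S = ∫⁻ t, ∑' i, ENNReal.ofReal (F i t) ∂μ := (lintegral_tsum hGm).symm
  have hSlow : ENNReal.ofReal (c / M ^ 2 * ‖f‖ ^ 2) * ENNReal.ofReal L ≤ S := by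
    rw [hSswap, ← hμuniv, ← lintegral_const]
    refine lintegral_mono_ae ?_
    refine ae_restrict_of_forall_mem measurableSet_Ioc fun t ht => ?_
    exact (hpt t ⟨ht.1.le, ht.2⟩).1
  have hShigh : S ≤ ENNReal.ofReal (B * (M ^ 2 * ‖f‖ ^ 2)) * ENNReal.ofReal L := by
    rw [hSswap, ← hμuniv, ← lintegral_const]
    refine lintegral_mono_ae ?_
    refine ae_restrict_of_forall_mem measurableSet_Ioc fun t ht => ?_
    exact (hpt t ⟨ht.1.le, ht.2⟩).2
  have hSne : S ≠ ⊤ := by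
    refine ne_top_of_le_ne_top ?_ hShigh
    exact ENNReal.mul_ne_top ENNReal.ofReal_ne_top ENNReal.ofReal_ne_top
  have htermne : ∀ i, (∫⁻ t, ENNReal.ofReal (F i t) ∂μ) ≠ ⊤ := by
    intro i
    refine ne_top_of_le_ne_top hSne ?_
    rw [hSdef]
    exact ENNReal.le_tsum i
  have hint : ∀ i, (∫ t in (0 : ℝ)..L, F i t) = (∫⁻ t, ENNReal.ofReal (F i t) ∂μ).toReal := by
    intro i
    rw [intervalIntegral.integral_of_le hL.le]
    exact integral_eq_lintegral_of_nonneg_ae (Filter.Eventually.of_forall fun t => sq_nonneg _)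
      (hcontF i).aestronglyMeasurable.restrict
  calc c / M ^ 2 * L * ‖f‖ ^ 2
      = (ENNReal.ofReal (c / M ^ 2 * ‖f‖ ^ 2) * ENNReal.ofReal L).toReal := by
        rw [← ENNReal.ofReal_mul (by positivity), ENNReal.toReal_ofReal (by positivity)]
        ring
    _ ≤ S.toReal := ENNReal.toReal_mono hSne hSlow
    _ = ∑' i, (∫⁻ t, ENNReal.ofReal (F i t) ∂μ).toReal := ENNReal.tsum_toReal_eq htermne
    _ = ∑' i, ∫ t in (0 : ℝ)..L, F i t := tsum_congr fun i => (hint i).symm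
    _ = ∑' i : I, ∫ t in (0 : ℝ)..L,
          ‖⟪f, (cfc (fun z : ℂ => z ^ (t : ℂ)) A) (g i)⟫_ℂ‖ ^ 2 := rfl

/-- If `A` is an invertible bounded normal operator with no negative real number in its
spectrum and the family `(gᵢ)` satisfies a lower frame inequality, then the semi-continuous
system `{A^t gᵢ : i ∈ I, t ∈ [0,L]}` satisfies a lower frame inequality as well. -/
theorem semicontinuous_lower_frame_bound_of_lower_frame_bound
    {H : Type*} [NormedAddCommGroup H] [InnerProductSpace ℂ H] [CompleteSpace H]
    (A : H →L[ℂ] H) (hA : IsStarNormal A) (hinv : IsUnit A)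
    (hspec : ∀ z ∈ spectrum ℂ A, 0 ≤ z.re ∨ z.im ≠ 0)
    (L : ℝ) (hL : 0 < L)
    {I : Type*} [Countable I] (g : I → H)
    (c : ℝ) (hc : 0 < c)
    (hlow : ∀ f : H, c * ‖f‖ ^ 2 ≤ ∑' i : I, ‖⟪f, g i⟫_ℂ‖ ^ 2) :
    ∃ C : ℝ, 0 < C ∧ ∀ f : H,
      C * ‖f‖ ^ 2 ≤
        ∑' i : I, ∫ t in (0 : ℝ)..L, ‖⟪f, (cfc (fun z : ℂ => z ^ (t : ℂ)) A) (g i)⟫_ℂ‖ ^ 2 := by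
  exact aux_main A hA hinv hspec L hL g c hc hlow
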